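/- Let X and Y be standard Borel spaces, let μ be a finite Borel measure on X, and let π : X → Y be a Borel measurable map. Suppose (μ_y)_{y ∈ Y} and (μ'_y)_{y ∈ Y} are two families of finite Borel measures on X each satisfying: (i) for every Borel A ⊆ X, y ↦ μ_y(A) (resp. y ↦ μ'_y(A)) is measurable; (ii) for π_*μ-a.e. y, μ_y (resp. μ'_y) is concentrated on π⁻¹({y}); (iii) μ(A) = ∫_Y μ_y(A) d(π_*μ)(y) (resp. with μ'_y) for every Borel A ⊆ X. Then μ_y = μ'_y for π_*μ-almost every y ∈ Y. (Uniqueness part of Rokhlin's theorem on canonical systems of measures.) -/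
import Mathlib


open MeasureTheory

noncomputable section

/-- A π-system generated by a countable set is countable. -/
lemma countable_generatePiSystem {α : Type*} {S : Set (Set α)} (hS : S.Countable) :
    (generatePiSystem S).Countable := by
  have h : generatePiSystem S ⊆ (fun F : Set (Set α) => ⋂₀ F) '' {F | F.Finite ∧ F ⊆ S} := by
    intro t ht
    induction ht with
    | base hs =>
      rename_i s
      exact ⟨{s}, ⟨Set.finite_singleton s, Set.singleton_subset_iff.2 hs⟩, by simp⟩
    | inter _ _ _ ihs iht =>
      obtain ⟨F, ⟨hFfin, hFS⟩, rfl⟩ := ihs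
      obtain ⟨G, ⟨hGfin, hGS⟩, rfl⟩ := iht
      exact ⟨F ∪ G, ⟨hFfin.union hGfin, Set.union_subset hFS hGS⟩, by
        simp only [Set.sInter_union]⟩
  exact Set.Countable.mono h ((Set.countable_setOf_finite_subset hS).image _)

/-- Key step: for a fixed measurable set, two canonical systems assign it equal measure a.e. -/
lemma rokhlin_uniqueness_aux {X Y : Type*} [MeasurableSpace X]
    [MeasurableSpace Y]
    (μ : Measure X) [IsFiniteMeasure μ] (π : X → Y) (hπ : Measurable π)
    (κ κ' : Y → Measure X)
    (hmeas : ∀ A : Set X, MeasurableSet A → Measurable fun y : Y => κ y A)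
    (hmeas' : ∀ A : Set X, MeasurableSet A → Measurable fun y : Y => κ' y A)
    (hconc : ∀ᵐ (y : Y) ∂(μ.map π), κ y ((π ⁻¹' {y})ᶜ) = 0)
    (hconc' : ∀ᵐ (y : Y) ∂(μ.map π), κ' y ((π ⁻¹' {y})ᶜ) = 0)
    (hint : ∀ A : Set X, MeasurableSet A → μ A = ∫⁻ y : Y, κ y A ∂(μ.map π))
    (hint' : ∀ A : Set X, MeasurableSet A → μ A = ∫⁻ y : Y, κ' y A ∂(μ.map π))
    {B : Set X} (hB : MeasurableSet B) :
    ∀ᵐ (y : Y) ∂(μ.map π), κ y B = κ' y B := by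
  haveI : IsFiniteMeasure (μ.map π) := Measure.isFiniteMeasure_map μ π
  have key : ∀ (ρ : Y → Measure X),
      (∀ᵐ (y : Y) ∂(μ.map π), ρ y ((π ⁻¹' {y})ᶜ) = 0) →
      (∀ A : Set X, MeasurableSet A → μ A = ∫⁻ y : Y, ρ y A ∂(μ.map π)) →
      ∀ A : Set Y, MeasurableSet A →
        ∫⁻ y in A, ρ y B ∂(μ.map π) = μ (π ⁻¹' A ∩ B) := by
    intro ρ hc hi A hA
    rw [hi _ ((hπ hA).inter hB), ← lintegral_indicator hA]
    refine lintegral_congr_ae ?_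
    filter_upwards [hc] with y hy
    by_cases hyA : y ∈ A
    · simp only [Set.indicator_of_mem hyA]
      refine le_antisymm ?_ (measure_mono Set.inter_subset_right)
      have hsub : B ⊆ (π ⁻¹' A ∩ B) ∪ (π ⁻¹' {y})ᶜ := by
        intro x hx
        by_cases hxy : π x = y
        · exact Or.inl ⟨by simp [hxy, hyA], hx⟩
        · exact Or.inr hxy
      calc ρ y B ≤ ρ y ((π ⁻¹' A ∩ B) ∪ (π ⁻¹' {y})ᶜ) := measure_mono hsub
        _ ≤ ρ y (π ⁻¹' A ∩ B) + ρ y ((π ⁻¹' {y})ᶜ) := measure_union_le _ _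
        _ = ρ y (π ⁻¹' A ∩ B) := by rw [hy, add_zero]
    · simp only [Set.indicator_of_notMem hyA]
      refine (measure_mono_null (fun x hx => ?_) hy).symm
      intro hxy
      have hxy' : π x = y := hxy
      exact hyA (hxy' ▸ hx.1)
  refine ae_eq_of_forall_setLIntegral_eq_of_sigmaFinite (hmeas B hB) (hmeas' B hB)
    fun A hA _ => ?_
  rw [key κ hconc hint A hA, key κ' hconc' hint' A hA]

/-- Uniqueness part of Rokhlin's theorem on canonical systems of measures: two canonical
systems for the partition of `X` into the fibers of `π` agree `π_*μ`-almost everywhere. -/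
theorem rokhlin_uniqueness {X Y : Type*} [MeasurableSpace X] [StandardBorelSpace X]
    [MeasurableSpace Y] [StandardBorelSpace Y]
    (μ : Measure X) [IsFiniteMeasure μ] (π : X → Y) (hπ : Measurable π)
    (κ κ' : Y → Measure X)
    (hfin : ∀ y : Y, IsFiniteMeasure (κ y)) (hfin' : ∀ y : Y, IsFiniteMeasure (κ' y))
    (hmeas : ∀ A : Set X, MeasurableSet A → Measurable fun y : Y => κ y A)
    (hmeas' : ∀ A : Set X, MeasurableSet A → Measurable fun y : Y => κ' y A)
    (hconc : ∀ᵐ (y : Y) ∂(μ.map π), κ y ((π ⁻¹' {y})ᶜ) = 0)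
    (hconc' : ∀ᵐ (y : Y) ∂(μ.map π), κ' y ((π ⁻¹' {y})ᶜ) = 0)
    (hint : ∀ A : Set X, MeasurableSet A → μ A = ∫⁻ y : Y, κ y A ∂(μ.map π))
    (hint' : ∀ A : Set X, MeasurableSet A → μ A = ∫⁻ y : Y, κ' y A ∂(μ.map π)) :
    ∀ᵐ (y : Y) ∂(μ.map π), κ y = κ' y := by
  have aux : ∀ {B : Set X}, MeasurableSet B →
      ∀ᵐ (y : Y) ∂(μ.map π), κ y B = κ' y B :=
    fun hB => rokhlin_uniqueness_aux μ π hπ κ κ' hmeas hmeas' hconc hconc' hint hint' hB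
  set S : Set (Set X) := MeasurableSpace.countableGeneratingSet X with hSdef
  set T : Set (Set X) := generatePiSystem S with hTdef
  have hTcount : T.Countable :=
    countable_generatePiSystem (MeasurableSpace.countable_countableGeneratingSet)
  have hTmeas : ∀ t ∈ T, MeasurableSet t := by
    intro t ht
    refine generatePiSystem_measurableSet (fun s hs => ?_) t ht
    exact MeasurableSpace.measurableSet_countableGeneratingSet hs
  have h_eq : ‹MeasurableSpace X› = MeasurableSpace.generateFrom T := by
    rw [hTdef, generateFrom_generatePiSystem_eq,
      MeasurableSpace.generateFrom_countableGeneratingSet]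
  have main : ∀ᵐ (y : Y) ∂(μ.map π), ∀ ⦃t : Set X⦄, MeasurableSet t → κ y t = κ' y t := by
    refine MeasurableSpace.ae_induction_on_inter h_eq (isPiSystem_generatePiSystem S)
      (ae_of_all _ fun y => by simp) ?_ ?_ ?_
    · exact (ae_ball_iff hTcount).2 fun t ht => aux (hTmeas t ht)
    · filter_upwards [aux MeasurableSet.univ] with y huniv t ht heq
      haveI := hfin y; haveI := hfin' y
      rw [measure_compl ht (measure_ne_top _ _), measure_compl ht (measure_ne_top _ _),
        huniv, heq]
    · refine ae_of_all _ fun y f hdisj hf heq => ?_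
      rw [measure_iUnion hdisj hf, measure_iUnion hdisj hf]
      exact tsum_congr heq
  filter_upwards [main] with y hy
  ext t ht
  exact hy ht
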